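/- For ε ∈ (0,1), define the pmf R₁ on {0,1}³ with coordinates (X,Y,Z) by R₁(0,0,0) = R₁(1,1,1) = (1/2)(1−ε/2), R₁(0,1,1) = R₁(1,0,0) = ε/4, and R₁(x,y,z) = 0 otherwise (so (Y,Z) is uniform on {(0,0),(1,1)} and X copies this common bit with probability 1−ε, otherwise is an independent uniform bit), and let R₂(x,y,z) := R₁(y,x,z). Then: (i) the squared Hellinger distance satisfies H²(R₁,R₂) = ε/2; and (ii) there exist constants c > 0 and ε₀ ∈ (0,1) such that for all ε ∈ (0,ε₀], the pairwise mutual informations under R₁ satisfy I(Y;Z) − I(X;Z) ≥ c·ε·log(1/ε). -/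
import Mathlib


noncomputable section

/-- The hard realizable distribution `R₁` on `{0,1}³` with coordinates
`(X,Y,Z)`: `(Y,Z)` is uniform on `{(0,0),(1,1)}` and `X` copies the common bit
with probability `1−ε`, otherwise being an independent uniform bit. So
`R₁(0,0,0)=R₁(1,1,1)=(1/2)(1−ε/2)`, `R₁(0,1,1)=R₁(1,0,0)=ε/4`, else `0`. -/
def S1 (ε : ℝ) : Bool × Bool × Bool → ℝ := fun t =>
  if t.1 = t.2.1 ∧ t.2.1 = t.2.2 then (1 / 2) * (1 - ε / 2)
  else if t.2.1 = t.2.2 then ε / 4 else 0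

/-- `R₂(x,y,z) := R₁(y,x,z)`. -/
def S2 (ε : ℝ) : Bool × Bool × Bool → ℝ := fun t => S1 ε (t.2.1, t.1, t.2.2)

/-- Squared Hellinger distance between two pmfs on a finite set. -/
def hellingerSq {Ω : Type*} [Fintype Ω] (P Q : Ω → ℝ) : ℝ :=
  (1 / 2) * ∑ x, (Real.sqrt (P x) - Real.sqrt (Q x)) ^ 2

/-- Mutual information of a pmf `Q` on `α × α`; terms with `Q z = 0` vanish. -/
def miP {α : Type*} [Fintype α] (Q : α × α → ℝ) : ℝ :=
  ∑ z : α × α, Q z * Real.log (Q z / ((∑ y, Q (z.1, y)) * (∑ x, Q (x, z.2))))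

/-- Fact A.2: (i) `H²(R₁,R₂) = ε/2`, and (ii) `I(Y;Z) − I(X;Z) ≥ c·ε·log(1/ε)`
for all small enough `ε`. -/
theorem stmt19 :
    (∀ ε : ℝ, 0 < ε → ε < 1 → hellingerSq (S1 ε) (S2 ε) = ε / 2) ∧
      (∃ c : ℝ, 0 < c ∧ ∃ ε₀ : ℝ, 0 < ε₀ ∧ ε₀ < 1 ∧
        ∀ ε : ℝ, 0 < ε → ε ≤ ε₀ →
          miP (fun w : Bool × Bool => ∑ a, S1 ε (a, w.1, w.2)) -
              miP (fun w : Bool × Bool => ∑ b, S1 ε (w.1, b, w.2)) ≥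
            c * ε * Real.log (1 / ε)) := by
  constructor
  · intro ε h0 h1
    have he : Real.sqrt ε ^ 2 = ε := Real.sq_sqrt h0.le
    have h4 : Real.sqrt 4 = 2 := by
      rw [show (4:ℝ) = 2^2 by norm_num, Real.sqrt_sq (by norm_num)]
    simp only [hellingerSq, S1, S2, Fintype.sum_prod_type, Fintype.sum_bool]
    norm_num [h4]
    nlinarith [he]
  · refine ⟨1/2, by norm_num, 1/2, by norm_num, by norm_num, ?_⟩
    intro ε h0 h1
    have hA : miP (fun w : Bool × Bool => ∑ a, S1 ε (a, w.1, w.2)) = Real.log 2 := by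
      simp only [miP, S1, Fintype.sum_prod_type, Fintype.sum_bool]
      norm_num
      rw [show (1:ℝ)/2*(1-ε/2)+ε/4 = 1/2 by ring, show ε/4 + (1:ℝ)/2*(1-ε/2) = 1/2 by ring,
        one_div, Real.log_inv]
      ring
    have hB : miP (fun w : Bool × Bool => ∑ b, S1 ε (w.1, b, w.2)) =
        (1-ε/2)*Real.log (2-ε) + (ε/2)*Real.log ε := by
      simp only [miP, S1, Fintype.sum_prod_type, Fintype.sum_bool]
      norm_num
      rw [show (1:ℝ)/2*(1-ε/2)+ε/4 = 1/2 by ring, show ε/4 + (1:ℝ)/2*(1-ε/2) = 1/2 by ring,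
        show (1:ℝ)/2*(1-ε/2)/(1/2*(1/2)) = 2-ε by ring, show ε/4/((1:ℝ)/2*(1/2)) = ε by ring]
      ring
    rw [hA, hB, show Real.log (1/ε) = -Real.log ε by rw [one_div, Real.log_inv]]
    have hle : (1-ε/2) * Real.log (2-ε) ≤ Real.log 2 := by
      have hnn : 0 ≤ Real.log (2-ε) := Real.log_nonneg (by linarith)
      have hl2 : Real.log (2-ε) ≤ Real.log 2 := Real.log_le_log (by linarith) (by linarith)
      nlinarith
    nlinarith [hle]

end
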